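/- Let L = {(0, y) : y ∈ k̄} ⊆ k̄² and p ∈ L. Let φ ∈ Aut(𝔸²) and ℓ ≥ 1 be such that φ^ℓ(L) = L, the sets φ^i(L) for 0 ≤ i ≤ ℓ−1 are pairwise distinct, and the Zariski closure of O_φ(p) in k̄² equals the union of the sets φ^i(L) for 0 ≤ i ≤ ℓ−1. Let G_p = {ψ ∈ Aut(𝔸²) : ψ(L) = L and ψ(p) = p} and let B = Aut(𝔸², O_{φ^ℓ}(p)), where O_{φ^ℓ}(p) = {φ^{ℓn}(p) : n ∈ ℤ}. Then Aut(𝔸², O_φ(p)) equals the intersection, over i = 0, …, ℓ−1, of the sets {φⁿ∘γ∘φ^{−i} : n ∈ ℤ, γ ∈ G_p ∩ B}. -/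

import Mathlib

open MvPolynomial

noncomputable section

/-- Points of the affine plane over the algebraic closure of `k`. -/
abbrev Pt (k : Type*) [Field k] : Type _ := Fin 2 → AlgebraicClosure k

/-- Plane automorphisms over `k`, modeled as `k`-algebra automorphisms of `k[x,y]`. -/
abbrev PlaneAut (k : Type*) [Field k] : Type _ :=
  MvPolynomial (Fin 2) k ≃ₐ[k] MvPolynomial (Fin 2) k

/-- The embedding of `k` in its algebraic closure. -/
abbrev emb (k : Type*) [Field k] : k →+* AlgebraicClosure k :=
  algebraMap k (AlgebraicClosure k)

variable {k : Type*} [Field k]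

/-- The action of a plane automorphism on the points of the plane over `k̄`:
the point map of `φ` is `q ↦ (f(q), g(q))` where `f = φ.symm X₀`, `g = φ.symm X₁`
(so that `actp` is a left action of the automorphism group on points). -/
def actp (φ : PlaneAut k) (q : Pt k) : Pt k :=
  fun i => aeval q (φ.symm (X i))

/-- The Zariski closure of a set of points of `k̄²`: the zero locus of the ideal of all
polynomials with coefficients in `k̄` vanishing on it. -/
def zclos (Δ : Set (Pt k)) : Set (Pt k) :=
  zeroLocus (AlgebraicClosure k) (vanishingIdeal (AlgebraicClosure k) Δ)

/-- `Δ̂` : the zero locus in `k̄²` of the ideal `I_k(Δ)` of all polynomials with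
coefficients in `k` vanishing on `Δ`. -/
def hatSet (Δ : Set (Pt k)) : Set (Pt k) :=
  {q | ∀ P : MvPolynomial (Fin 2) k, (∀ x ∈ Δ, aeval x P = 0) → aeval q P = 0}

/-- Coordinatewise action of the Galois group `Gal(k̄/k)` on points of `k̄²`. -/
def galAct (g : AlgebraicClosure k ≃ₐ[k] AlgebraicClosure k) (q : Pt k) : Pt k :=
  fun i => g (q i)

/-- A subset of `k̄²` is Zariski closed iff it is the zero locus of an ideal of `k̄[x,y]`. -/
def IsZClosed (S : Set (Pt k)) : Prop :=
  ∃ I : Ideal (MvPolynomial (Fin 2) (AlgebraicClosure k)), S = zeroLocus (AlgebraicClosure k) I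

/-- Irreducibility with respect to the Zariski topology on `k̄²`. -/
def IsZIrreducible (S : Set (Pt k)) : Prop :=
  S.Nonempty ∧ ∀ Z₁ Z₂ : Set (Pt k), IsZClosed Z₁ → IsZClosed Z₂ → S ⊆ Z₁ ∪ Z₂ →
    (S ⊆ Z₁ ∨ S ⊆ Z₂)

/-- `C` is an irreducible component of `S` (for the Zariski topology on `k̄²`):
a maximal irreducible subset of `S`. -/
def IsIrredComponentOf (C S : Set (Pt k)) : Prop :=
  IsZIrreducible C ∧ C ⊆ S ∧ ∀ C' : Set (Pt k), IsZIrreducible C' → C' ⊆ S → C ⊆ C' → C = C'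

/-- The stabilizer `Aut(𝔸², Δ)` of a set of points of `k̄²`, as a set of plane automorphisms. -/
def stabSet (Δ : Set (Pt k)) : Set (PlaneAut k) :=
  {φ | actp φ '' Δ = Δ}

/-- The orbit `O_H(p)` of a point under a subgroup of plane automorphisms. -/
def orbSub (H : Subgroup (PlaneAut k)) (p : Pt k) : Set (Pt k) :=
  {q | ∃ h ∈ H, actp h p = q}

/-- The orbit `O_φ(p) = {φⁿ(p) : n ∈ ℤ}` of a point under a single plane automorphism. -/
def orbAut (φ : PlaneAut k) (p : Pt k) : Set (Pt k) :=
  {q | ∃ n : ℤ, actp (φ ^ n) p = q}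

/-- The degree of a plane automorphism: the maximum of the total degrees of the two
polynomials giving its point map. -/
def autDegree (φ : PlaneAut k) : ℕ :=
  max (φ.symm (X 0)).totalDegree (φ.symm (X 1)).totalDegree

/-- The torus `T = {(x,y) ↦ (t·x, t⁻¹·y) : t ∈ k*}`, as a set of plane automorphisms. -/
def torusT (k : Type*) [Field k] : Set (PlaneAut k) :=
  {φ | ∃ t : k, t ≠ 0 ∧ ∀ q : Pt k, actp φ q = ![emb k t * q 0, (emb k t)⁻¹ * q 1]}

end


section Aux

variable {k : Type*} [Field k]

local notation "K" => AlgebraicClosure k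

lemma aeval_actp (χ : PlaneAut k) (q : Pt k) (P : MvPolynomial (Fin 2) k) :
    aeval (actp χ q) P = aeval q (χ.symm P) := by
  have : (aeval (actp χ q) : MvPolynomial (Fin 2) k →ₐ[k] K)
      = (aeval q).comp χ.symm.toAlgHom := by
    apply MvPolynomial.algHom_ext
    intro i
    simp [actp]
  exact DFunLike.congr_fun this P

lemma actp_one (q : Pt k) : actp (1 : PlaneAut k) q = q := by
  funext i
  show aeval q ((1 : PlaneAut k).symm (X i)) = q i
  rw [show ((1 : PlaneAut k).symm) = AlgEquiv.refl from rfl]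
  simp

lemma actp_mul (ψ χ : PlaneAut k) (q : Pt k) :
    actp (ψ * χ) q = actp ψ (actp χ q) := by
  funext i
  show aeval q ((ψ * χ).symm (X i)) = aeval (actp χ q) (ψ.symm (X i))
  rw [aeval_actp]
  rfl


lemma actp_actp_inv (ψ : PlaneAut k) (q : Pt k) : actp ψ (actp ψ⁻¹ q) = q := by
  rw [← actp_mul, mul_inv_cancel, actp_one]

lemma actp_inv_actp (ψ : PlaneAut k) (q : Pt k) : actp ψ⁻¹ (actp ψ q) = q := by
  rw [← actp_mul, inv_mul_cancel, actp_one]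

lemma actp_injective (ψ : PlaneAut k) : Function.Injective (actp ψ) :=
  Function.LeftInverse.injective (actp_inv_actp ψ)

lemma image_actp_eq_preimage (ψ : PlaneAut k) (S : Set (Pt k)) :
    actp ψ '' S = actp ψ⁻¹ ⁻¹' S :=
  congrFun (Set.image_eq_preimage_of_inverse (actp_inv_actp ψ) (actp_actp_inv ψ)) S

/-- The induced substitution endomorphism of `k̄[x,y]`. -/
noncomputable def pmap (ψ : PlaneAut k) : MvPolynomial (Fin 2) (AlgebraicClosure k)
    →ₐ[AlgebraicClosure k] MvPolynomial (Fin 2) (AlgebraicClosure k) :=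
  aeval (fun i => MvPolynomial.map (emb k) (ψ.symm (X i)))

lemma aeval_K_eq_eval (q : Pt k) (P : MvPolynomial (Fin 2) (AlgebraicClosure k)) :
    aeval (R := AlgebraicClosure k) q P = eval q P := rfl

lemma eval_actp (ψ : PlaneAut k) (q : Pt k) (P : MvPolynomial (Fin 2) (AlgebraicClosure k)) :
    eval (actp ψ q) P = eval q (pmap ψ P) := by
  rw [← aeval_K_eq_eval, ← aeval_K_eq_eval]
  have : (aeval (R := AlgebraicClosure k) (actp ψ q)) = (aeval q).comp (pmap ψ) := by
    apply MvPolynomial.algHom_ext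
    intro i
    show aeval (actp ψ q) (X i) = (aeval q).comp (pmap ψ) (X i)
    rw [aeval_X, AlgHom.comp_apply]
    show actp ψ q i = aeval q (pmap ψ (X i))
    simp only [pmap, aeval_X, actp]
    rw [aeval_K_eq_eval, ← eval₂_eq_eval_map]
    rfl
  exact DFunLike.congr_fun this P

lemma preimage_zeroLocus (ψ : PlaneAut k) (I : Ideal (MvPolynomial (Fin 2) (AlgebraicClosure k))) :
    actp ψ ⁻¹' zeroLocus K I = zeroLocus K (I.map (pmap ψ).toRingHom) := by
  ext q
  simp only [Set.mem_preimage, mem_zeroLocus_iff]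
  constructor
  · intro h Q hQ
    have : I.map (pmap ψ).toRingHom ≤ vanishingIdeal K {q} := by
      rw [Ideal.map_le_iff_le_comap]
      intro P hP
      rw [Ideal.mem_comap, mem_vanishingIdeal_singleton_iff]
      rw [aeval_K_eq_eval, AlgHom.toRingHom_eq_coe, RingHom.coe_coe, ← eval_actp]
      exact h P hP
    exact (mem_vanishingIdeal_singleton_iff _ _).mp (this hQ)
  · intro h P hP
    show eval (actp ψ q) P = 0
    rw [eval_actp]
    exact h _ (Ideal.mem_map_of_mem _ hP)

lemma isZClosed_preimage (ψ : PlaneAut k) {Z : Set (Pt k)} (hZ : IsZClosed Z) :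
    IsZClosed (actp ψ ⁻¹' Z) := by
  obtain ⟨I, rfl⟩ := hZ
  exact ⟨_, preimage_zeroLocus ψ I⟩

lemma isZClosed_image (ψ : PlaneAut k) {Z : Set (Pt k)} (hZ : IsZClosed Z) :
    IsZClosed (actp ψ '' Z) := by
  rw [image_actp_eq_preimage]
  exact isZClosed_preimage _ hZ

lemma isZClosed_zclos (Δ : Set (Pt k)) : IsZClosed (zclos Δ) := ⟨_, rfl⟩

lemma subset_zclos (Δ : Set (Pt k)) : Δ ⊆ zclos Δ :=
  zeroLocus_vanishingIdeal_le (k := AlgebraicClosure k) Δ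

lemma zclos_min {Δ Z : Set (Pt k)} (h : Δ ⊆ Z) (hZ : IsZClosed Z) : zclos Δ ⊆ Z := by
  obtain ⟨I, rfl⟩ := hZ
  exact zeroLocus_anti_mono (le_vanishingIdeal_zeroLocus I |>.trans (vanishingIdeal_anti_mono h))

lemma zclos_image (ψ : PlaneAut k) (Δ : Set (Pt k)) :
    actp ψ '' zclos Δ = zclos (actp ψ '' Δ) := by
  apply Set.Subset.antisymm
  · have h1 : zclos Δ ⊆ actp ψ ⁻¹' zclos (actp ψ '' Δ) := by
      apply zclos_min
      · intro q hq
        exact subset_zclos _ (Set.mem_image_of_mem _ hq)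
      · exact isZClosed_preimage ψ (isZClosed_zclos _)
    intro x hx
    obtain ⟨q, hq, rfl⟩ := hx
    exact h1 hq
  · apply zclos_min (Set.image_mono (subset_zclos Δ)) (isZClosed_image ψ (isZClosed_zclos Δ))

lemma isZClosed_empty : IsZClosed (∅ : Set (Pt k)) :=
  ⟨⊤, by rw [zeroLocus_top]; rfl⟩

lemma zeroLocus_inf (I J : Ideal (MvPolynomial (Fin 2) (AlgebraicClosure k))) :
    zeroLocus K (I ⊓ J) = zeroLocus K I ∪ zeroLocus K J := by
  apply Set.Subset.antisymm
  · intro q hq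
    by_cases hI : q ∈ zeroLocus K I
    · exact Or.inl hI
    · right
      rw [mem_zeroLocus_iff] at hI
      push_neg at hI
      obtain ⟨f, hfI, hf⟩ := hI
      intro g hgJ
      have : f * g ∈ I ⊓ J := ⟨Ideal.mul_mem_right _ _ hfI, Ideal.mul_mem_left _ _ hgJ⟩
      have h0 := hq _ this
      rw [map_mul] at h0
      rcases mul_eq_zero.mp h0 with h | h
      · exact absurd h hf
      · exact h
  · rintro q (hq | hq)
    · exact fun f hf => hq f hf.1
    · exact fun f hf => hq f hf.2

lemma isZClosed_union {A B : Set (Pt k)} (hA : IsZClosed A) (hB : IsZClosed B) :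
    IsZClosed (A ∪ B) := by
  obtain ⟨I, rfl⟩ := hA
  obtain ⟨J, rfl⟩ := hB
  exact ⟨I ⊓ J, (zeroLocus_inf I J).symm⟩

lemma isZClosed_singleton (q : Pt k) : IsZClosed ({q} : Set (Pt k)) := by
  refine ⟨vanishingIdeal K {q}, ?_⟩
  apply Set.Subset.antisymm
  · intro r hr
    subst hr
    exact zeroLocus_vanishingIdeal_le _ rfl
  · intro r hr
    have : ∀ i : Fin 2, r i = q i := by
      intro i
      have hx : (X i - C (q i) : MvPolynomial (Fin 2) (AlgebraicClosure k))
          ∈ vanishingIdeal K ({q} : Set (Pt k)) := by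
        rw [mem_vanishingIdeal_singleton_iff]
        simp
      have := hr _ hx
      simp at this
      linear_combination (norm := ring_nf) this
    exact Set.mem_singleton_iff.mpr (funext this)

lemma isZClosed_finite {S : Set (Pt k)} (h : S.Finite) : IsZClosed S := by
  classical
  lift S to Finset (Pt k) using h
  induction S using Finset.induction_on with
  | empty => simpa using isZClosed_empty
  | insert _ _ ha ih =>
    rw [Finset.coe_insert, Set.insert_eq]
    exact isZClosed_union (isZClosed_singleton _) ih

lemma isZClosed_biUnion_range (m : ℕ) (Z : ℕ → Set (Pt k)) (hZ : ∀ j, IsZClosed (Z j)) :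
    IsZClosed (⋃ j ∈ Finset.range m, Z j) := by
  induction m with
  | zero => simpa using isZClosed_empty
  | succ m ih =>
    rw [Finset.range_add_one]
    have : (⋃ j ∈ insert m (Finset.range m), Z j)
        = (⋃ j ∈ Finset.range m, Z j) ∪ Z m := by
      rw [Finset.set_biUnion_insert, Set.union_comm]
    rw [this]
    exact isZClosed_union ih (hZ m)

lemma irred_subset_of_cover {S : Set (Pt k)} (hS : IsZIrreducible S) (m : ℕ)
    (Z : ℕ → Set (Pt k)) (hZ : ∀ j, IsZClosed (Z j))
    (hcov : S ⊆ ⋃ j ∈ Finset.range m, Z j) : ∃ j < m, S ⊆ Z j := by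
  induction m with
  | zero =>
    simp only [Finset.range_zero, Finset.notMem_empty, Set.iUnion_of_empty,
      Set.iUnion_empty] at hcov
    exact absurd (hcov hS.1.choose_spec) (Set.notMem_empty _)
  | succ m ih =>
    have hcov' : S ⊆ (⋃ j ∈ Finset.range m, Z j) ∪ Z m := by
      refine hcov.trans ?_
      rw [Finset.range_add_one]
      intro x hx
      simp only [Set.mem_iUnion, Finset.mem_insert] at hx
      obtain ⟨j, (rfl | hj), hxj⟩ := hx
      · exact Or.inr hxj
      · exact Or.inl (Set.mem_biUnion hj hxj)
    rcases hS.2 _ _ (isZClosed_biUnion_range m Z hZ) (hZ m) hcov' with h | h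
    · obtain ⟨j, hj, hSj⟩ := ih h
      exact ⟨j, Nat.lt_succ_of_lt hj, hSj⟩
    · exact ⟨m, Nat.lt_succ_self m, h⟩

lemma isZIrreducible_image (ψ : PlaneAut k) {S : Set (Pt k)} (hS : IsZIrreducible S) :
    IsZIrreducible (actp ψ '' S) := by
  refine ⟨hS.1.image _, ?_⟩
  intro Z₁ Z₂ h₁ h₂ hcov
  have : S ⊆ actp ψ ⁻¹' Z₁ ∪ actp ψ ⁻¹' Z₂ := by
    intro x hx
    rcases hcov (Set.mem_image_of_mem _ hx) with h | h
    · exact Or.inl h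
    · exact Or.inr h
  rcases hS.2 _ _ (isZClosed_preimage ψ h₁) (isZClosed_preimage ψ h₂) this with h | h
  · exact Or.inl (Set.image_subset_iff.mpr h)
  · exact Or.inr (Set.image_subset_iff.mpr h)

/-- The vertical line `x = 0`. -/
def L0 (k : Type*) [Field k] : Set (Pt k) := {q : Pt k | q 0 = 0}

lemma pt_eq (q : Pt k) : q = ![q 0, q 1] := by
  funext i
  fin_cases i <;> simp

lemma mem_L0_eq {q : Pt k} (hq : q ∈ L0 k) : q = ![0, q 1] := by
  funext i
  fin_cases i
  · exact hq
  · simp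

lemma pt_injective : Function.Injective (fun y : AlgebraicClosure k => (![0, y] : Pt k)) := by
  intro a b h
  have := congrFun h 1
  simpa using this

lemma L0_infinite : (L0 k).Infinite := by
  have : Set.range (fun y : AlgebraicClosure k => (![0, y] : Pt k)) ⊆ L0 k := by
    rintro q ⟨y, rfl⟩
    simp [L0]
  exact Set.Infinite.mono this (Set.infinite_range_of_injective pt_injective)

lemma isZClosed_L0 : IsZClosed (L0 k) := by
  refine ⟨Ideal.span {X 0}, ?_⟩
  rw [zeroLocus_span]
  ext q
  simp [L0]

/-- Restriction of a 2-variable polynomial to the line `x = 0`. -/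
noncomputable def restr (P : MvPolynomial (Fin 2) (AlgebraicClosure k)) :
    Polynomial (AlgebraicClosure k) :=
  aeval ![0, Polynomial.X] P

lemma eval_restr (P : MvPolynomial (Fin 2) (AlgebraicClosure k)) (y : AlgebraicClosure k) :
    Polynomial.eval y (restr (k := k) P) = eval ![0, y] P := by
  rw [← Polynomial.coe_aeval_eq_eval, ← aeval_K_eq_eval]
  have : ((Polynomial.aeval y).comp
        (aeval ![0, Polynomial.X]) : MvPolynomial (Fin 2) (AlgebraicClosure k)
        →ₐ[AlgebraicClosure k] AlgebraicClosure k)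
      = aeval ![0, y] := by
    apply MvPolynomial.algHom_ext
    intro i
    fin_cases i <;> simp
  exact DFunLike.congr_fun this P

/-- The univariate polynomials giving the point map of `ψ` restricted to the line `x = 0`. -/
noncomputable def upoly (ψ : PlaneAut k) (i : Fin 2) : Polynomial (AlgebraicClosure k) :=
  restr (MvPolynomial.map (emb k) (ψ.symm (X i)))

lemma actp_coord (ψ : PlaneAut k) (q : Pt k) (i : Fin 2) :
    actp ψ q i = eval q (MvPolynomial.map (emb k) (ψ.symm (X i))) := by
  rw [actp, aeval_def, eval₂_eq_eval_map]

lemma actp_line (ψ : PlaneAut k) (y : AlgebraicClosure k) (i : Fin 2) :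
    actp ψ ![0, y] i = Polynomial.eval y (upoly ψ i) := by
  rw [actp_coord, upoly, eval_restr]

/-- If the image of the line `x = 0` under an automorphism meets the line in infinitely
many points, then it equals the line. -/
lemma image_L0_eq_of_infinite (ψ : PlaneAut k)
    (h : ((actp ψ '' L0 k) ∩ L0 k).Infinite) : actp ψ '' L0 k = L0 k := by
  -- first coordinate polynomial vanishes identically
  have hu0 : upoly ψ 0 = 0 := by
    by_contra h0
    apply h
    have hsub : (actp ψ '' L0 k) ∩ L0 k ⊆
        actp ψ '' ((fun y => (![0, y] : Pt k)) '' {y | Polynomial.IsRoot (upoly ψ 0) y}) := by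
      rintro r ⟨⟨q, hq, rfl⟩, hr⟩
      have hq0 : q = ![0, q 1] := mem_L0_eq hq
      refine ⟨q, ⟨q 1, ?_, hq0.symm⟩, rfl⟩
      rw [Set.mem_setOf_eq, Polynomial.IsRoot, ← actp_line]
      rw [← hq0]
      exact hr
    exact Set.Finite.subset
      (Set.Finite.image _ (Set.Finite.image _ (Polynomial.finite_setOf_isRoot h0))) hsub
  -- so the image is contained in the line
  have himg : actp ψ '' L0 k ⊆ L0 k := by
    rintro r ⟨q, hq, rfl⟩
    have hq0 : q = ![0, q 1] := mem_L0_eq hq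
    show actp ψ q 0 = 0
    rw [hq0, actp_line, hu0, Polynomial.eval_zero]
  -- second coordinate polynomial has positive degree
  have hdeg : 0 < (upoly ψ 1).degree := by
    by_contra hd
    push_neg at hd
    have hc := Polynomial.eq_C_of_degree_le_zero hd
    have h01 : actp ψ ![0, 0] = actp ψ ![0, 1] := by
      funext i
      fin_cases i
      · show actp ψ ![0, 0] 0 = actp ψ ![0, 1] 0
        rw [actp_line, actp_line, hu0]
        simp
      · show actp ψ ![0, 0] 1 = actp ψ ![0, 1] 1
        rw [actp_line, actp_line, hc]
        simp
    have h2 := congrFun (actp_injective ψ h01) 1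
    simp at h2
  -- surjectivity onto the line
  apply Set.Subset.antisymm himg
  intro r hr
  have hr2 : r = ![0, r 1] := mem_L0_eq hr
  obtain ⟨y, hy⟩ := IsAlgClosed.exists_root (upoly ψ 1 - Polynomial.C (r 1))
    (by rw [Polynomial.degree_sub_C hdeg]; exact hdeg.ne')
  refine ⟨![0, y], by simp [L0], ?_⟩
  rw [hr2]
  funext i
  fin_cases i
  · show actp ψ ![0, y] 0 = ![0, r 1] 0
    rw [actp_line, hu0]
    simp
  · show actp ψ ![0, y] 1 = ![0, r 1] 1
    rw [actp_line]
    simpa [Polynomial.IsRoot, sub_eq_zero] using hy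

lemma isZIrreducible_L0 : IsZIrreducible (L0 k) := by
  constructor
  · exact ⟨![0, 0], by simp [L0]⟩
  rintro Z₁ Z₂ ⟨I, rfl⟩ ⟨J, rfl⟩ hcov
  by_contra hcon
  push_neg at hcon
  obtain ⟨h1, h2⟩ := hcon
  rw [Set.not_subset] at h1 h2
  obtain ⟨a, ha, haI⟩ := h1
  obtain ⟨b, hb, hbJ⟩ := h2
  rw [mem_zeroLocus_iff] at haI hbJ
  push_neg at haI hbJ
  obtain ⟨P, hPI, hPa⟩ := haI
  obtain ⟨Q, hQJ, hQb⟩ := hbJ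
  have hrP : restr (k := k) P ≠ 0 := by
    intro h0
    apply hPa
    rw [aeval_K_eq_eval, mem_L0_eq ha, ← eval_restr, h0, Polynomial.eval_zero]
  have hrQ : restr (k := k) Q ≠ 0 := by
    intro h0
    apply hQb
    rw [aeval_K_eq_eval, mem_L0_eq hb, ← eval_restr, h0, Polynomial.eval_zero]
  have hne : restr (k := k) P * restr (k := k) Q ≠ 0 := mul_ne_zero hrP hrQ
  obtain ⟨y, hy⟩ := (Polynomial.finite_setOf_isRoot hne).infinite_compl.nonempty
  simp only [Set.mem_compl_iff, Set.mem_setOf_eq, Polynomial.IsRoot,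
    Polynomial.eval_mul] at hy
  have hyL : (![0, y] : Pt k) ∈ L0 k := by simp [L0]
  rcases hcov hyL with hc | hc
  · have h0 : eval ![0, y] P = 0 := (mem_zeroLocus_iff).mp hc P hPI
    rw [← eval_restr] at h0
    exact hy (by rw [h0, zero_mul])
  · have h0 : eval ![0, y] Q = 0 := (mem_zeroLocus_iff).mp hc Q hQJ
    rw [← eval_restr] at h0
    exact hy (by rw [h0, mul_zero])

lemma stab_mul {Δ : Set (Pt k)} {ψ χ : PlaneAut k} (hψ : actp ψ '' Δ = Δ)
    (hχ : actp χ '' Δ = Δ) : actp (ψ * χ) '' Δ = Δ := by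
  have hf : actp (ψ * χ) = actp ψ ∘ actp χ := funext (actp_mul ψ χ)
  rw [hf, Set.image_comp, hχ, hψ]

lemma stab_inv {Δ : Set (Pt k)} {ψ : PlaneAut k} (hψ : actp ψ '' Δ = Δ) :
    actp ψ⁻¹ '' Δ = Δ := by
  conv_lhs => rw [← hψ]
  rw [← Set.image_comp]
  have : actp ψ⁻¹ ∘ actp ψ = id := funext (actp_inv_actp ψ)
  rw [this, Set.image_id]

lemma stab_one (Δ : Set (Pt k)) : actp (1 : PlaneAut k) '' Δ = Δ := by
  have : actp (1 : PlaneAut k) = id := funext actp_one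
  rw [this, Set.image_id]

lemma stab_zpow {Δ : Set (Pt k)} {ψ : PlaneAut k} (hψ : actp ψ '' Δ = Δ) (n : ℤ) :
    actp (ψ ^ n) '' Δ = Δ := by
  induction n using Int.induction_on with
  | zero => simpa using stab_one Δ
  | succ m ih => rw [zpow_add, zpow_one]; exact stab_mul ih hψ
  | pred m ih =>
    have he : (-(m : ℤ) - 1) = -1 + -(m : ℤ) := by ring
    rw [he, zpow_add, zpow_neg_one]
    exact stab_mul (stab_inv hψ) ih

lemma fix_mul {r : Pt k} {ψ χ : PlaneAut k} (hψ : actp ψ r = r) (hχ : actp χ r = r) :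
    actp (ψ * χ) r = r := by rw [actp_mul, hχ, hψ]

lemma fix_inv {r : Pt k} {ψ : PlaneAut k} (hψ : actp ψ r = r) : actp ψ⁻¹ r = r := by
  conv_lhs => rw [← hψ]
  rw [actp_inv_actp]

lemma fix_zpow {r : Pt k} {ψ : PlaneAut k} (hψ : actp ψ r = r) (n : ℤ) :
    actp (ψ ^ n) r = r := by
  induction n using Int.induction_on with
  | zero => simpa using actp_one r
  | succ m ih => rw [zpow_add, zpow_one, actp_mul, hψ]; exact ih
  | pred m ih =>
    have he : (-(m : ℤ) - 1) = -1 + -(m : ℤ) := by ring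
    rw [he, zpow_add, zpow_neg_one, actp_mul, ih]
    exact fix_inv hψ

lemma actp_zpow_add (φ : PlaneAut k) (m n : ℤ) (q : Pt k) :
    actp (φ ^ (m + n)) q = actp (φ ^ m) (actp (φ ^ n) q) := by
  rw [zpow_add, actp_mul]

lemma image_zpow_add (φ : PlaneAut k) (m n : ℤ) (Δ : Set (Pt k)) :
    actp (φ ^ (m + n)) '' Δ = actp (φ ^ m) '' (actp (φ ^ n) '' Δ) := by
  have hf : actp (φ ^ (m + n)) = actp (φ ^ m) ∘ actp (φ ^ n) := by
    rw [zpow_add]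
    exact funext (actp_mul _ _)
  rw [hf, Set.image_comp]

/-- If one translate of the line is contained in another, they are equal. -/
lemma line_sub_line {φ : PlaneAut k} {m n : ℤ}
    (h : actp (φ ^ m) '' L0 k ⊆ actp (φ ^ n) '' L0 k) :
    actp (φ ^ m) '' L0 k = actp (φ ^ n) '' L0 k := by
  have key : (actp (φ ^ (m - n)) '' L0 k) ∩ L0 k = actp (φ ^ (m - n)) '' L0 k := by
    apply Set.inter_eq_self_of_subset_left
    have := Set.image_mono (f := actp (φ ^ (-n))) h
    rw [← image_zpow_add, ← image_zpow_add, neg_add_cancel] at this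
    rw [sub_eq_neg_add]
    exact this.trans (by rw [zpow_zero]; rw [stab_one])
  have hinf : ((actp (φ ^ (m - n)) '' L0 k) ∩ L0 k).Infinite := by
    rw [key]
    exact L0_infinite.image (Set.injOn_of_injective (actp_injective _))
  have := image_L0_eq_of_infinite _ hinf
  have h2 := congrArg (Set.image (actp (φ ^ n))) this
  rw [← image_zpow_add, add_sub_cancel] at h2
  exact h2

/-- The "coset" `{φ^{ℓn+i}(p) : n ∈ ℤ}` of the orbit. -/
def Cset (φ : PlaneAut k) (p : Pt k) (ℓ : ℕ) (i : ℤ) : Set (Pt k) :=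
  {q | ∃ n : ℤ, actp (φ ^ (ℓ * n + i)) p = q}

lemma Cset_image (φ : PlaneAut k) (p : Pt k) (ℓ : ℕ) (m i : ℤ) :
    actp (φ ^ m) '' Cset φ p ℓ i = Cset φ p ℓ (i + m) := by
  ext q
  constructor
  · rintro ⟨r, ⟨n, rfl⟩, rfl⟩
    refine ⟨n, ?_⟩
    rw [← actp_zpow_add]
    congr 1
    ring_nf
  · rintro ⟨n, rfl⟩
    refine ⟨actp (φ ^ (ℓ * n + i)) p, ⟨n, rfl⟩, ?_⟩
    rw [← actp_zpow_add]
    congr 1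
    ring_nf

lemma zpow_coe_mul (φ : PlaneAut k) (ℓ : ℕ) (t : ℤ) : φ ^ ((ℓ : ℤ) * t) = (φ ^ ℓ) ^ t := by
  rw [← zpow_natCast φ ℓ, ← zpow_mul]

lemma orbC_eq (φ : PlaneAut k) (p : Pt k) (ℓ : ℕ) :
    orbAut (φ ^ ℓ) p = Cset φ p ℓ 0 := by
  ext q
  constructor
  · rintro ⟨n, rfl⟩
    exact ⟨n, by rw [add_zero, zpow_coe_mul]⟩
  · rintro ⟨n, rfl⟩
    exact ⟨n, by rw [add_zero, zpow_coe_mul]⟩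

lemma Cset_mod (φ : PlaneAut k) (p : Pt k) (ℓ : ℕ) (i t : ℤ) :
    Cset φ p ℓ (i + ℓ * t) = Cset φ p ℓ i := by
  ext q
  constructor
  · rintro ⟨n, rfl⟩
    exact ⟨n + t, by congr 1; ring⟩
  · rintro ⟨n, rfl⟩
    exact ⟨n - t, by congr 1; ring⟩

lemma Cset_sub_orb (φ : PlaneAut k) (p : Pt k) (ℓ : ℕ) (i : ℤ) :
    Cset φ p ℓ i ⊆ orbAut φ p := by
  rintro q ⟨n, rfl⟩
  exact ⟨ℓ * n + i, rfl⟩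

lemma orb_decomp (φ : PlaneAut k) (p : Pt k) {ℓ : ℕ} (hℓ : 1 ≤ ℓ) :
    orbAut φ p = ⋃ i ∈ Finset.range ℓ, Cset φ p ℓ (i : ℤ) := by
  apply Set.Subset.antisymm
  · rintro q ⟨m, rfl⟩
    have hl0 : (0 : ℤ) < (ℓ : ℤ) := by exact_mod_cast hℓ
    have h1 : 0 ≤ m % (ℓ : ℤ) := Int.emod_nonneg m hl0.ne'
    have h2 : m % (ℓ : ℤ) < (ℓ : ℤ) := Int.emod_lt_of_pos m hl0
    refine Set.mem_biUnion (Finset.mem_range.mpr ?_) (?_ : _ ∈ Cset φ p ℓ ((m % (ℓ:ℤ)).toNat : ℤ))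
    · omega
    · refine ⟨m / (ℓ : ℤ), ?_⟩
      rw [Int.toNat_of_nonneg h1, Int.mul_ediv_add_emod m (ℓ : ℤ)]
  · intro q hq
    rw [Set.mem_iUnion₂] at hq
    obtain ⟨i, _, hqi⟩ := hq
    exact Cset_sub_orb φ p ℓ i hqi

lemma line_per {φ : PlaneAut k} {ℓ : ℕ}
    (hst : actp (φ ^ ℓ) '' L0 k = L0 k) (t : ℤ) :
    actp (φ ^ ((ℓ : ℤ) * t)) '' L0 k = L0 k := by
  rw [zpow_coe_mul]
  exact stab_zpow hst t

lemma C0_sub_L0 {φ : PlaneAut k} {p : Pt k} {ℓ : ℕ}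
    (hst : actp (φ ^ ℓ) '' L0 k = L0 k) (hp : p ∈ L0 k) :
    Cset φ p ℓ 0 ⊆ L0 k := by
  rintro q ⟨n, rfl⟩
  rw [add_zero]
  rw [← line_per hst n]
  exact Set.mem_image_of_mem _ hp

lemma Cset_sub_line {φ : PlaneAut k} {p : Pt k} {ℓ : ℕ}
    (hst : actp (φ ^ ℓ) '' L0 k = L0 k) (hp : p ∈ L0 k) (i : ℤ) :
    Cset φ p ℓ i ⊆ actp (φ ^ i) '' L0 k := by
  have h1 : Cset φ p ℓ i = actp (φ ^ i) '' Cset φ p ℓ 0 := by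
    rw [Cset_image, zero_add]
  rw [h1]
  exact Set.image_mono (C0_sub_L0 hst hp)

lemma orb_inj {φ : PlaneAut k} {p : Pt k} {ℓ : ℕ} (hℓ : 1 ≤ ℓ)
    (hcl : zclos (orbAut φ p) = ⋃ i ∈ Finset.range ℓ, actp (φ ^ i) '' L0 k) :
    ∀ a b : ℤ, actp (φ ^ a) p = actp (φ ^ b) p → a = b := by
  intro a b heq
  by_contra hne
  -- p is fixed by a nontrivial power of φ
  have hfix : actp (φ ^ (a - b)) p = p := by
    have h := congrArg (actp (φ ^ (-b))) heq
    rw [← actp_zpow_add, ← actp_zpow_add, neg_add_cancel, zpow_zero, actp_one] at h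
    rw [show a - b = -b + a by ring]
    exact h
  set e : ℤ := ((a - b).natAbs : ℤ) with he
  have he0 : 0 < e := by
    have : a - b ≠ 0 := sub_ne_zero.mpr hne
    simp [he]
    omega
  have hfe : actp (φ ^ e) p = p := by
    rcases Int.natAbs_eq (a - b) with h | h
    · rw [he, ← h]; exact hfix
    · have h2 : φ ^ e = (φ ^ (a - b))⁻¹ := by
        rw [← zpow_neg]
        congr 1
        omega
      rw [h2]
      exact fix_inv hfix
  -- every orbit point is one of finitely many
  have hsub : orbAut φ p ⊆ (fun j : ℕ => actp (φ ^ (j : ℤ)) p) '' (Set.Iio e.toNat) := by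
    rintro q ⟨m, rfl⟩
    refine ⟨(m % e).toNat, ?_, ?_⟩
    · have h1 : 0 ≤ m % e := Int.emod_nonneg m he0.ne'
      have h2 : m % e < e := Int.emod_lt_of_pos m he0
      simp only [Set.mem_Iio]
      omega
    · have hfet : ∀ t : ℤ, actp (φ ^ (e * t)) p = p := by
        intro t
        rw [show φ ^ (e * t) = (φ ^ e) ^ t by rw [← zpow_mul]]
        exact fix_zpow hfe t
      have h1 : 0 ≤ m % e := Int.emod_nonneg m he0.ne'
      show actp (φ ^ (((m % e).toNat : ℕ) : ℤ)) p = actp (φ ^ m) p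
      rw [Int.toNat_of_nonneg h1]
      conv_rhs => rw [show m = m % e + e * (m / e) from (Int.emod_add_mul_ediv m e).symm]
      rw [actp_zpow_add, hfet]
  have hfin : (orbAut φ p).Finite :=
    Set.Finite.subset (Set.Finite.image _ (Set.finite_Iio _)) hsub
  have hL0 : L0 k ⊆ zclos (orbAut φ p) := by
    rw [hcl]
    intro q hq
    refine Set.mem_biUnion (Finset.mem_range.mpr hℓ) ?_
    rw [pow_zero, stab_one]
    exact hq
  have hfin2 : L0 k ⊆ orbAut φ p :=
    hL0.trans (zclos_min (subset_refl _) (isZClosed_finite hfin))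
  exact L0_infinite (hfin.subset hfin2)

lemma Cset_disjoint {φ : PlaneAut k} {p : Pt k} {ℓ : ℕ} (hℓ : 1 ≤ ℓ)
    (hcl : zclos (orbAut φ p) = ⋃ i ∈ Finset.range ℓ, actp (φ ^ i) '' L0 k)
    {i j : ℕ} (hi : i < ℓ) (hj : j < ℓ)
    (hne : (Cset φ p ℓ (i : ℤ) ∩ Cset φ p ℓ (j : ℤ)).Nonempty) : i = j := by
  obtain ⟨q, ⟨n, hn⟩, ⟨m, hm⟩⟩ := hne
  have heq := orb_inj hℓ hcl _ _ (hn.trans hm.symm)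
  have hd : (ℓ : ℤ) ∣ ((i : ℤ) - (j : ℤ)) := ⟨m - n, by linear_combination heq⟩
  have habs : |(i : ℤ) - (j : ℤ)| < (ℓ : ℤ) := by
    rw [abs_lt]
    omega
  have := Int.eq_zero_of_abs_lt_dvd hd habs
  omega

lemma zpow_natCast_line (φ : PlaneAut k) (j : ℕ) :
    actp (φ ^ (j : ℤ)) '' L0 k = actp (φ ^ j) '' L0 k := by rw [zpow_natCast]

lemma clC {φ : PlaneAut k} {p : Pt k} {ℓ : ℕ} (hℓ : 1 ≤ ℓ) (hp : p ∈ L0 k)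
    (hst : actp (φ ^ ℓ) '' L0 k = L0 k)
    (hdist : ∀ i < ℓ, ∀ j < ℓ,
      actp (φ ^ i) '' L0 k = actp (φ ^ j) '' L0 k → i = j)
    (hcl : zclos (orbAut φ p) = ⋃ i ∈ Finset.range ℓ, actp (φ ^ i) '' L0 k)
    {i : ℕ} (hi : i < ℓ) :
    zclos (Cset φ p ℓ (i : ℤ)) = actp (φ ^ (i : ℤ)) '' L0 k := by
  have hsub : ∀ j : ℕ, zclos (Cset φ p ℓ (j : ℤ)) ⊆ actp (φ ^ (j : ℤ)) '' L0 k :=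
    fun j => zclos_min (Cset_sub_line hst hp (j : ℤ)) (isZClosed_image _ isZClosed_L0)
  have hcov : actp (φ ^ (i : ℤ)) '' L0 k ⊆
      ⋃ j ∈ Finset.range ℓ, zclos (Cset φ p ℓ (j : ℤ)) := by
    have h1 : actp (φ ^ (i : ℤ)) '' L0 k ⊆ zclos (orbAut φ p) := by
      rw [hcl, zpow_natCast_line]
      intro r hr
      exact Set.mem_biUnion (Finset.mem_range.mpr hi) hr
    refine h1.trans (zclos_min ?_ ?_)
    · rw [orb_decomp φ p hℓ]
      intro q hq
      rw [Set.mem_iUnion₂] at hq ⊢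
      obtain ⟨j, hjr, hqj⟩ := hq
      exact ⟨j, hjr, subset_zclos _ hqj⟩
    · exact isZClosed_biUnion_range ℓ _ (fun j => isZClosed_zclos _)
  obtain ⟨j, hjℓ, hsubj⟩ := irred_subset_of_cover
    (isZIrreducible_image (φ ^ (i : ℤ)) isZIrreducible_L0) ℓ _
    (fun j => isZClosed_zclos _) hcov
  have hij : actp (φ ^ (i : ℤ)) '' L0 k ⊆ actp (φ ^ (j : ℤ)) '' L0 k :=
    hsubj.trans (hsub j)
  have heqij : i = j := by
    apply hdist i hi j hjℓ
    rw [← zpow_natCast_line, ← zpow_natCast_line]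
    exact line_sub_line hij
  subst heqij
  exact Set.Subset.antisymm (hsub i) hsubj

lemma orb_inter_line {φ : PlaneAut k} {p : Pt k} {ℓ : ℕ} (hℓ : 1 ≤ ℓ) (hp : p ∈ L0 k)
    (hst : actp (φ ^ ℓ) '' L0 k = L0 k)
    (hdist : ∀ i < ℓ, ∀ j < ℓ,
      actp (φ ^ i) '' L0 k = actp (φ ^ j) '' L0 k → i = j)
    (hcl : zclos (orbAut φ p) = ⋃ i ∈ Finset.range ℓ, actp (φ ^ i) '' L0 k)
    {i : ℕ} (hi : i < ℓ) :
    orbAut φ p ∩ (actp (φ ^ (i : ℤ)) '' L0 k) ⊆ Cset φ p ℓ (i : ℤ) := by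
  rintro q ⟨⟨m, rfl⟩, hqL⟩
  have hl0 : (0 : ℤ) < (ℓ : ℤ) := by exact_mod_cast hℓ
  have h1 : 0 ≤ m % (ℓ : ℤ) := Int.emod_nonneg m hl0.ne'
  have h2 : m % (ℓ : ℤ) < (ℓ : ℤ) := Int.emod_lt_of_pos m hl0
  set j : ℕ := (m % (ℓ : ℤ)).toNat with hjdef
  have hjl : j < ℓ := by omega
  have hqj : ∀ t : ℤ, actp (φ ^ ((ℓ : ℤ) * t + m)) p ∈ Cset φ p ℓ (j : ℤ) := by
    intro t
    refine ⟨t + m / (ℓ : ℤ), ?_⟩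
    have hE : (ℓ : ℤ) * (t + m / (ℓ : ℤ)) + (j : ℤ) = (ℓ : ℤ) * t + m := by
      have hj2 : ((j : ℕ) : ℤ) = m % (ℓ : ℤ) := by omega
      rw [hj2]
      linear_combination Int.mul_ediv_add_emod m (ℓ : ℤ)
    rw [hE]
  have hqLt : ∀ t : ℤ, actp (φ ^ ((ℓ : ℤ) * t + m)) p ∈ actp (φ ^ (i : ℤ)) '' L0 k := by
    intro t
    have hinv : actp (φ ^ ((ℓ : ℤ) * t)) '' (actp (φ ^ (i : ℤ)) '' L0 k)
        = actp (φ ^ (i : ℤ)) '' L0 k := by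
      rw [← image_zpow_add, add_comm, image_zpow_add, line_per hst t]
    rw [← hinv, actp_zpow_add]
    exact Set.mem_image_of_mem _ hqL
  -- the translated infinite set
  have hinj : Function.Injective
      (fun t : ℤ => actp (φ ^ (-(i : ℤ) + ((ℓ : ℤ) * t + m))) p) := by
    intro s t hst2
    have := orb_inj hℓ hcl _ _ hst2
    have hl : (ℓ : ℤ) ≠ 0 := hl0.ne'
    have : (ℓ : ℤ) * s = (ℓ : ℤ) * t := by omega
    exact mul_left_cancel₀ hl this
  have hTsub : Set.range (fun t : ℤ => actp (φ ^ (-(i : ℤ) + ((ℓ : ℤ) * t + m))) p)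
      ⊆ (actp (φ ^ ((j : ℤ) - (i : ℤ))) '' L0 k) ∩ L0 k := by
    rintro r ⟨t, rfl⟩
    show actp (φ ^ (-(i : ℤ) + ((ℓ : ℤ) * t + m))) p ∈ _
    constructor
    · have h3 := Cset_sub_line hst hp (j : ℤ) (hqj t)
      have h4 := Set.mem_image_of_mem (actp (φ ^ (-(i : ℤ)))) h3
      rw [← image_zpow_add] at h4
      rw [actp_zpow_add]
      convert h4 using 3
      ring
    · have h4 := Set.mem_image_of_mem (actp (φ ^ (-(i : ℤ)))) (hqLt t)
      rw [← image_zpow_add, neg_add_cancel, zpow_zero, stab_one] at h4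
      rw [actp_zpow_add]
      exact h4
  have hinf : ((actp (φ ^ ((j : ℤ) - (i : ℤ))) '' L0 k) ∩ L0 k).Infinite :=
    Set.Infinite.mono hTsub (Set.infinite_range_of_injective hinj)
  have hline := image_L0_eq_of_infinite _ hinf
  have hij : j = i := by
    apply hdist j hjl i hi
    rw [← zpow_natCast_line, ← zpow_natCast_line]
    have := congrArg (Set.image (actp (φ ^ (i : ℤ)))) hline
    rw [← image_zpow_add, add_sub_cancel] at this
    exact this
  have hmem := hqj 0
  rw [mul_zero, zero_add] at hmem
  rw [← hij]
  exact hmem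

lemma image_actp_inv_image (γ : PlaneAut k) (Δ : Set (Pt k)) :
    actp γ '' (actp γ⁻¹ '' Δ) = Δ := by
  rw [← Set.image_comp, show actp γ ∘ actp γ⁻¹ = id from funext (actp_actp_inv γ), Set.image_id]

lemma coset_image {φ : PlaneAut k} {p : Pt k} {ℓ : ℕ} (hℓ : 1 ≤ ℓ) (hp : p ∈ L0 k)
    (hst : actp (φ ^ ℓ) '' L0 k = L0 k)
    (hdist : ∀ i < ℓ, ∀ j < ℓ,
      actp (φ ^ i) '' L0 k = actp (φ ^ j) '' L0 k → i = j)
    (hcl : zclos (orbAut φ p) = ⋃ i ∈ Finset.range ℓ, actp (φ ^ i) '' L0 k)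
    {ψ : PlaneAut k} (hψ : actp ψ '' orbAut φ p = orbAut φ p)
    {i : ℕ} (hi : i < ℓ) :
    ∃ r < ℓ, actp ψ '' Cset φ p ℓ (i : ℤ) ⊆ Cset φ p ℓ (r : ℤ) := by
  have horb : actp ψ '' Cset φ p ℓ (i : ℤ) ⊆ orbAut φ p := by
    rw [← hψ]
    exact Set.image_mono (Cset_sub_orb φ p ℓ (i : ℤ))
  have h1 : actp ψ '' (actp (φ ^ (i : ℤ)) '' L0 k) = zclos (actp ψ '' Cset φ p ℓ (i : ℤ)) := by
    rw [← clC hℓ hp hst hdist hcl hi, zclos_image]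
  have h3 : zclos (actp ψ '' Cset φ p ℓ (i : ℤ)) ⊆
      ⋃ j ∈ Finset.range ℓ, actp (φ ^ j) '' L0 k := by
    rw [← hcl]
    exact zclos_min (horb.trans (subset_zclos _)) (isZClosed_zclos _)
  obtain ⟨r, hrℓ, hsub⟩ := irred_subset_of_cover
    (isZIrreducible_image ψ (isZIrreducible_image (φ ^ (i : ℤ)) isZIrreducible_L0)) ℓ _
    (fun j => isZClosed_image _ isZClosed_L0) (by rw [h1]; exact h3)
  refine ⟨r, hrℓ, ?_⟩
  have h4 : actp ψ '' Cset φ p ℓ (i : ℤ) ⊆ actp (φ ^ (r : ℤ)) '' L0 k := by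
    rw [zpow_natCast_line]
    intro q hq
    exact hsub (by rw [h1]; exact subset_zclos _ hq)
  intro q hq
  exact orb_inter_line hℓ hp hst hdist hcl hrℓ ⟨horb hq, h4 hq⟩

lemma image_mul (ψ χ : PlaneAut k) (Δ : Set (Pt k)) :
    actp (ψ * χ) '' Δ = actp ψ '' (actp χ '' Δ) := by
  rw [show actp (ψ * χ) = actp ψ ∘ actp χ from funext (actp_mul ψ χ), Set.image_comp]

lemma Cset_reduce {φ : PlaneAut k} {p : Pt k} {ℓ : ℕ} (hℓ : 1 ≤ ℓ) (n : ℤ) :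
    ∃ r : ℕ, r < ℓ ∧ Cset φ p ℓ n = Cset φ p ℓ (r : ℤ) := by
  have hl0 : (0 : ℤ) < (ℓ : ℤ) := by exact_mod_cast hℓ
  have h1 : 0 ≤ n % (ℓ : ℤ) := Int.emod_nonneg n hl0.ne'
  have h2 : n % (ℓ : ℤ) < (ℓ : ℤ) := Int.emod_lt_of_pos n hl0
  refine ⟨(n % (ℓ : ℤ)).toNat, by omega, ?_⟩
  have h3 : (((n % (ℓ : ℤ)).toNat : ℕ) : ℤ) = n % (ℓ : ℤ) := Int.toNat_of_nonneg h1
  rw [h3]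
  conv_lhs => rw [show n = n % (ℓ : ℤ) + (ℓ : ℤ) * (n / (ℓ : ℤ)) from
    (Int.emod_add_mul_ediv n (ℓ : ℤ)).symm]
  exact Cset_mod φ p ℓ _ _

lemma Cset_self_mem (φ : PlaneAut k) (p : Pt k) (ℓ : ℕ) (i : ℤ) :
    actp (φ ^ i) p ∈ Cset φ p ℓ i :=
  ⟨0, by rw [mul_zero, zero_add]⟩

end Aux

/-- Let `L = {x = 0}` and `p ∈ L`. If `φ^ℓ(L) = L`, the sets
`φ^i(L)` (`0 ≤ i ≤ ℓ−1`) are pairwise distinct and the Zariski closure of `O_φ(p)` is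
their union, then, with `G_p` the stabilizer of `L` fixing `p` and
`B = Aut(𝔸², O_{φ^ℓ}(p))`, we have
`Aut(𝔸², O_φ(p)) = ⋂_{i=0}^{ℓ−1} {φⁿ∘γ∘φ^{−i} : n ∈ ℤ, γ ∈ G_p ∩ B}`. -/
theorem stmt_18 (k : Type*) [Field k] [PerfectField k] (p : Pt k) (hp : p 0 = 0)
    (φ : PlaneAut k) (ℓ : ℕ) (hℓ : 1 ≤ ℓ)
    (hst : actp (φ ^ ℓ) '' {q : Pt k | q 0 = 0} = {q : Pt k | q 0 = 0})
    (hdist : ∀ i < ℓ, ∀ j < ℓ,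
      actp (φ ^ i) '' {q : Pt k | q 0 = 0} = actp (φ ^ j) '' {q : Pt k | q 0 = 0} → i = j)
    (hcl : zclos (orbAut φ p) = ⋃ i ∈ Finset.range ℓ, actp (φ ^ i) '' {q : Pt k | q 0 = 0}) :
    stabSet (orbAut φ p) = ⋂ i ∈ Finset.range ℓ,
      {ψ : PlaneAut k | ∃ (n : ℤ) (γ : PlaneAut k),
        (actp γ '' {q : Pt k | q 0 = 0} = {q : Pt k | q 0 = 0} ∧ actp γ p = p) ∧
        γ ∈ stabSet (orbAut (φ ^ ℓ) p) ∧
        ψ = φ ^ n * γ * (φ ^ i)⁻¹} := by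
  have hp' : p ∈ L0 k := hp
  have hst' : actp (φ ^ ℓ) '' L0 k = L0 k := hst
  have hdist' : ∀ i < ℓ, ∀ j < ℓ,
      actp (φ ^ i) '' L0 k = actp (φ ^ j) '' L0 k → i = j := hdist
  have hcl' : zclos (orbAut φ p) = ⋃ i ∈ Finset.range ℓ, actp (φ ^ i) '' L0 k := hcl
  ext ψ
  simp only [Set.mem_iInter, Set.mem_setOf_eq]
  constructor
  · -- ⊆ : a stabilizing automorphism has the required form
    intro hψ i hir
    have hi : i < ℓ := Finset.mem_range.mp hir
    replace hψ : actp ψ '' orbAut φ p = orbAut φ p := hψ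
    have hpiC : actp (φ ^ (i : ℤ)) p ∈ Cset φ p ℓ (i : ℤ) := Cset_self_mem φ p ℓ _
    have hpiO : actp (φ ^ (i : ℤ)) p ∈ orbAut φ p := ⟨i, rfl⟩
    obtain ⟨n, hn⟩ : actp ψ (actp (φ ^ (i : ℤ)) p) ∈ orbAut φ p := by
      rw [← hψ]
      exact Set.mem_image_of_mem _ hpiO
    obtain ⟨r, hrℓ, hσ⟩ := coset_image hℓ hp' hst' hdist' hcl' hψ hi
    -- the coset of `n` is the coset `r`
    have hnC : actp (φ ^ n) p ∈ Cset φ p ℓ (r : ℤ) := by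
      rw [hn]
      exact hσ (Set.mem_image_of_mem _ hpiC)
    obtain ⟨r2, hr2, hred⟩ := Cset_reduce (φ := φ) (p := p) hℓ n
    have hr2r : r2 = r := by
      apply Cset_disjoint hℓ hcl' hr2 hrℓ
      refine ⟨actp (φ ^ n) p, ?_, hnC⟩
      rw [← hred]
      exact Cset_self_mem φ p ℓ n
    have hCn : Cset φ p ℓ n = Cset φ p ℓ (r : ℤ) := by rw [hred, hr2r]
    -- the candidate automorphism
    set γ : PlaneAut k := φ ^ (-n) * ψ * φ ^ (i : ℤ) with hγ
    have hCi : actp (φ ^ (i : ℤ)) '' Cset φ p ℓ 0 = Cset φ p ℓ (i : ℤ) := by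
      rw [Cset_image, zero_add]
    -- image of the zeroth coset under γ
    have himgγ : actp γ '' Cset φ p ℓ 0 ⊆ Cset φ p ℓ 0 := by
      rw [hγ, image_mul, image_mul, hCi]
      refine (Set.image_mono hσ).trans ?_
      rw [← hCn, Cset_image, add_neg_cancel]
    -- reverse inclusion via ψ⁻¹
    have hψinv : actp ψ⁻¹ '' orbAut φ p = orbAut φ p := stab_inv hψ
    obtain ⟨r', hr'ℓ, hσ'⟩ := coset_image hℓ hp' hst' hdist' hcl' hψinv hrℓ
    have hCiinv : Cset φ p ℓ (i : ℤ) ⊆ actp ψ⁻¹ '' Cset φ p ℓ (r : ℤ) := by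
      have h5 : actp ψ⁻¹ '' (actp (ψ⁻¹)⁻¹ '' Cset φ p ℓ (i : ℤ)) = Cset φ p ℓ (i : ℤ) :=
        image_actp_inv_image ψ⁻¹ _
      rw [inv_inv] at h5
      rw [← h5]
      exact Set.image_mono hσ
    have hir' : i = r' := by
      apply Cset_disjoint hℓ hcl' hi hr'ℓ
      exact ⟨actp (φ ^ (i : ℤ)) p, hpiC, hσ' (hCiinv hpiC)⟩
    have hinvsub : actp ψ⁻¹ '' Cset φ p ℓ (r : ℤ) ⊆ Cset φ p ℓ (i : ℤ) := by
      rw [hir']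
      exact hσ'
    have hγinv : γ⁻¹ = φ ^ (-(i : ℤ)) * ψ⁻¹ * φ ^ n := by
      rw [hγ]
      group
    have himgγinv : actp γ⁻¹ '' Cset φ p ℓ 0 ⊆ Cset φ p ℓ 0 := by
      rw [hγinv, image_mul, image_mul, Cset_image, zero_add, hCn]
      refine (Set.image_mono hinvsub).trans ?_
      rw [Cset_image, add_neg_cancel]
    have hγC0 : actp γ '' Cset φ p ℓ 0 = Cset φ p ℓ 0 := by
      apply Set.Subset.antisymm himgγ
      have h6 : actp γ '' (actp γ⁻¹ '' Cset φ p ℓ 0) = Cset φ p ℓ 0 :=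
        image_actp_inv_image γ _
      conv_lhs => rw [← h6]
      exact Set.image_mono himgγinv
    -- γ fixes p
    have hγp : actp γ p = p := by
      rw [hγ, actp_mul, actp_mul, ← hn, ← actp_zpow_add, neg_add_cancel, zpow_zero, actp_one]
    -- γ preserves the line
    have hzc : zclos (Cset φ p ℓ 0) = L0 k := by
      have h7 := clC hℓ hp' hst' hdist' hcl' (show 0 < ℓ from hℓ)
      rw [Nat.cast_zero, zpow_zero, stab_one] at h7
      exact h7
    have hγL : actp γ '' L0 k = L0 k := by
      rw [← hzc, zclos_image, hγC0]
    refine ⟨n, γ, ⟨hγL, hγp⟩, ?_, ?_⟩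
    · show actp γ '' orbAut (φ ^ ℓ) p = orbAut (φ ^ ℓ) p
      rw [orbC_eq]
      exact hγC0
    · rw [hγ, ← zpow_natCast φ i]
      group
  · -- ⊇ : an automorphism of the given form stabilizes the orbit
    intro hψ
    show actp ψ '' orbAut φ p = orbAut φ p
    have key : ∀ j : Fin ℓ, ∃ rf : Fin ℓ,
        actp ψ '' Cset φ p ℓ ((j : ℕ) : ℤ) = Cset φ p ℓ ((rf : ℕ) : ℤ) := by
      intro j
      obtain ⟨n, γ, ⟨hγL, hγp⟩, hγB, hcomp⟩ := hψ j (Finset.mem_range.mpr j.isLt)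
      have himg : actp ψ '' Cset φ p ℓ ((j : ℕ) : ℤ) = Cset φ p ℓ n := by
        rw [hcomp, image_mul, image_mul]
        have h0 : actp ((φ ^ (j : ℕ))⁻¹) '' Cset φ p ℓ ((j : ℕ) : ℤ) = Cset φ p ℓ 0 := by
          rw [show (φ ^ (j : ℕ))⁻¹ = φ ^ (-((j : ℕ) : ℤ)) from by
            rw [← zpow_natCast φ (j : ℕ), ← zpow_neg]]
          rw [Cset_image, add_neg_cancel]
        rw [h0]
        have h1 : actp γ '' Cset φ p ℓ 0 = Cset φ p ℓ 0 := by
          rw [← orbC_eq]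
          exact hγB
        rw [h1, Cset_image, zero_add]
      obtain ⟨r2, hr2, hred⟩ := Cset_reduce (φ := φ) (p := p) hℓ n
      exact ⟨⟨r2, hr2⟩, by rw [himg, hred]⟩
    choose f hf using key
    have hfinj : Function.Injective f := by
      intro a b hab
      have h2 : actp ψ '' Cset φ p ℓ ((a : ℕ) : ℤ) = actp ψ '' Cset φ p ℓ ((b : ℕ) : ℤ) := by
        rw [hf a, hf b, hab]
      have hCab : Cset φ p ℓ ((a : ℕ) : ℤ) = Cset φ p ℓ ((b : ℕ) : ℤ) :=
        Set.image_injective.mpr (actp_injective ψ) h2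
      have hmem := Cset_self_mem φ p ℓ ((a : ℕ) : ℤ)
      have : (a : ℕ) = (b : ℕ) :=
        Cset_disjoint hℓ hcl' a.isLt b.isLt ⟨_, hmem, hCab ▸ hmem⟩
      exact Fin.ext this
    have hfsurj : Function.Surjective f := Finite.surjective_of_injective hfinj
    have hdecomp : orbAut φ p = ⋃ j : Fin ℓ, Cset φ p ℓ ((j : ℕ) : ℤ) := by
      rw [orb_decomp φ p hℓ]
      apply Set.Subset.antisymm
      · intro q hq
        rw [Set.mem_iUnion₂] at hq
        obtain ⟨j, hjr, hqj⟩ := hq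
        exact Set.mem_iUnion.mpr ⟨⟨j, Finset.mem_range.mp hjr⟩, hqj⟩
      · intro q hq
        obtain ⟨j, hqj⟩ := Set.mem_iUnion.mp hq
        exact Set.mem_biUnion (Finset.mem_range.mpr j.isLt) hqj
    rw [hdecomp, Set.image_iUnion]
    calc (⋃ j : Fin ℓ, actp ψ '' Cset φ p ℓ ((j : ℕ) : ℤ))
        = ⋃ j : Fin ℓ, Cset φ p ℓ (((f j) : ℕ) : ℤ) := Set.iUnion_congr hf
      _ = ⋃ j : Fin ℓ, Cset φ p ℓ ((j : ℕ) : ℤ) :=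
          hfsurj.iUnion_comp (fun j => Cset φ p ℓ ((j : ℕ) : ℤ))
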